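/- Let A be a commutative ring, E a finitely generated A-module, S₀ a multiplicatively closed subset of A, R = A ∝ E the trivial ring extension of A by E, and S = S₀ ∝ E = {(s, e) : s ∈ S₀, e ∈ E}. Assume every ideal of R is homogeneous, i.e., every ideal J of R is of the form I ∝ F = {(a, e) : a ∈ I, e ∈ F} for some ideal I of A and some submodule F of E with IE ⊆ F. If A is an S₀-Bézout ring and every finitely generated submodule of E is S₀-cyclic, then R is an S-Bézout ring. -/

import Mathlib

/-- An ideal `I` of a commutative ring `R` is `S`-principal if there exist `s ∈ S`
and `a ∈ R` such that `sI ⊆ aR ⊆ I`. -/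
def Ideal.IsSPrincipal {R : Type*} [CommRing R] (S : Set R) (I : Ideal R) : Prop :=
  ∃ s ∈ S, ∃ a : R, (∀ x ∈ I, s * x ∈ Ideal.span {a}) ∧ Ideal.span {a} ≤ I

/-- A commutative ring `R` is `S`-Bézout if every finitely generated ideal of `R`
is `S`-principal. -/
def IsSBezout (R : Type*) [CommRing R] (S : Set R) : Prop :=
  ∀ I : Ideal R, I.FG → I.IsSPrincipal S

/-- A submodule `F` of an `A`-module `E` is `S`-cyclic if there exist `s ∈ S` and
`e ∈ F` such that `sF ⊆ Ae ⊆ F`. -/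
def Submodule.IsSCyclic {A E : Type*} [CommRing A] [AddCommGroup E] [Module A E]
    (S : Set A) (F : Submodule A E) : Prop :=
  ∃ s ∈ S, ∃ e ∈ F, (∀ m ∈ F, s • m ∈ Submodule.span A {e}) ∧ Submodule.span A {e} ≤ F

/-- Let `E` be a finitely generated `A`-module, `R = A ∝ E` the trivial ring
extension and `S = S₀ ∝ E`. Assume every ideal of `R` is homogeneous, i.e. of the
form `I ∝ F` for an ideal `I` of `A` and a submodule `F` of `E` with `IE ⊆ F`.
If `A` is `S₀`-Bézout and every finitely generated submodule of `E` is
`S₀`-cyclic, then `R` is `S`-Bézout. -/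
theorem sBezout_trivSqZeroExt_of_homogeneous {A E : Type*} [CommRing A] [AddCommGroup E]
    [Module A E] [Module Aᵐᵒᵖ E] [IsCentralScalar A E] [Module.Finite A E]
    (S₀ : Submonoid A)
    (hhom : ∀ J : Ideal (TrivSqZeroExt A E), ∃ (I : Ideal A) (F : Submodule A E),
      (∀ a ∈ I, ∀ e : E, a • e ∈ F) ∧
        ∀ x : TrivSqZeroExt A E, x ∈ J ↔ x.fst ∈ I ∧ x.snd ∈ F)
    (hA : IsSBezout A S₀)
    (hcyc : ∀ F : Submodule A E, F.FG → F.IsSCyclic (S₀ : Set A)) :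
    IsSBezout (TrivSqZeroExt A E) {x : TrivSqZeroExt A E | x.fst ∈ S₀} := by
  classical
  intro J hJfg
  obtain ⟨I, F, hIF, hmem⟩ := hhom J
  obtain ⟨T, hT⟩ := hJfg
  -- candidate descriptions of I and F
  set I' : Ideal A := Ideal.span (TrivSqZeroExt.fst '' (T : Set (TrivSqZeroExt A E))) with hI'def
  set F' : Submodule A E :=
    Submodule.span A (TrivSqZeroExt.snd '' (T : Set (TrivSqZeroExt A E))) ⊔
      I' • (⊤ : Submodule A E) with hF'def
  have hTJ : ∀ x ∈ (T : Set (TrivSqZeroExt A E)), x ∈ J := by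
    intro x hx
    rw [← hT]
    exact Ideal.subset_span hx
  -- key induction: components of elements of J lie in I' and F'
  have key : ∀ x ∈ J, x.fst ∈ I' ∧ x.snd ∈ F' := by
    intro x hx
    rw [← hT] at hx
    refine Submodule.span_induction (p := fun x _ => x.fst ∈ I' ∧ x.snd ∈ F') ?_ ?_ ?_ ?_ hx
    · intro y hy
      constructor
      · exact Ideal.subset_span ⟨y, hy, rfl⟩
      · exact Submodule.mem_sup_left (Submodule.subset_span ⟨y, hy, rfl⟩)
    · exact ⟨I'.zero_mem, F'.zero_mem⟩
    · intro y z _ _ hy hz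
      exact ⟨I'.add_mem hy.1 hz.1, F'.add_mem hy.2 hz.2⟩
    · intro r y _ hy
      have h1 : (r • y).fst = r.fst * y.fst := rfl
      have h2 : (r • y).snd = r.fst • y.snd + MulOpposite.op y.fst • r.snd := rfl
      constructor
      · rw [h1]; exact Ideal.mul_mem_left _ _ hy.1
      · rw [h2]
        refine F'.add_mem (F'.smul_mem _ hy.2) ?_
        rw [op_smul_eq_smul]
        exact Submodule.mem_sup_right (Submodule.smul_mem_smul hy.1 Submodule.mem_top)
  have hII' : I = I' := by
    apply le_antisymm
    · intro c hc
      have : (TrivSqZeroExt.inl c : TrivSqZeroExt A E) ∈ J :=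
        (hmem _).mpr ⟨by simpa using hc, by simpa using F.zero_mem⟩
      simpa using (key _ this).1
    · rw [hI'def, Ideal.span_le]
      rintro _ ⟨y, hy, rfl⟩
      exact ((hmem _).mp (hTJ y hy)).1
  have hFF' : F = F' := by
    apply le_antisymm
    · intro f hf
      have : (TrivSqZeroExt.inr f : TrivSqZeroExt A E) ∈ J :=
        (hmem _).mpr ⟨by simpa using I.zero_mem, by simpa using hf⟩
      simpa using (key _ this).2
    · rw [hF'def]
      refine sup_le ?_ ?_
      · rw [Submodule.span_le]
        rintro _ ⟨y, hy, rfl⟩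
        exact ((hmem _).mp (hTJ y hy)).2
      · refine Submodule.smul_le.mpr ?_
        intro r hr m _
        have hrI : r ∈ I := by rw [hII']; exact hr
        exact hIF r hrI m
  -- finite generation of I and F
  have hIfg : I.FG := by
    rw [hII', hI'def]
    exact ⟨T.image TrivSqZeroExt.fst, by rw [Finset.coe_image]⟩
  have hFfg : F.FG := by
    rw [hFF', hF'def]
    refine Submodule.FG.sup ⟨T.image TrivSqZeroExt.snd, by rw [Finset.coe_image]⟩ ?_
    obtain ⟨G, hG⟩ := Module.Finite.fg_top (R := A) (M := E)
    rw [hI'def, ← hG, Submodule.span_smul_span]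
    rw [Submodule.fg_def]
    refine ⟨_, ?_, rfl⟩
    exact Set.Finite.smul (T.finite_toSet.image _) G.finite_toSet
  -- apply the hypotheses
  obtain ⟨s, hs, a, hsa, haI⟩ := hA I hIfg
  obtain ⟨t, ht, e, heF, hte, -⟩ := hcyc F hFfg
  have haI' : a ∈ I := haI (Ideal.mem_span_singleton_self a)
  -- the generator
  set g : TrivSqZeroExt A E := TrivSqZeroExt.inl a + TrivSqZeroExt.inr e with hgdef
  have hgfst : g.fst = a := by simp [hgdef]
  have hgsnd : g.snd = e := by simp [hgdef]
  -- homogeneity of the principal ideal (g)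
  obtain ⟨I₂, F₂, -, hmem₂⟩ := hhom (Ideal.span {g})
  have hgmem : g ∈ Ideal.span {g} := Ideal.mem_span_singleton_self g
  have ha2 : a ∈ I₂ := hgfst ▸ ((hmem₂ g).mp hgmem).1
  have he2 : e ∈ F₂ := hgsnd ▸ ((hmem₂ g).mp hgmem).2
  have hinl : (TrivSqZeroExt.inl a : TrivSqZeroExt A E) ∈ Ideal.span {g} :=
    (hmem₂ _).mpr ⟨by simpa using ha2, by simpa using F₂.zero_mem⟩
  have hinr : (TrivSqZeroExt.inr e : TrivSqZeroExt A E) ∈ Ideal.span {g} :=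
    (hmem₂ _).mpr ⟨by simpa using I₂.zero_mem, by simpa using he2⟩
  refine ⟨TrivSqZeroExt.inl (s * t), by simpa using S₀.mul_mem hs ht, g, ?_, ?_⟩
  · intro x hx
    obtain ⟨hxf, hxs⟩ := (hmem x).mp hx
    obtain ⟨b, hb⟩ := Ideal.mem_span_singleton.mp (hsa x.fst hxf)
    obtain ⟨l, hl⟩ := Submodule.mem_span_singleton.mp (hte x.snd hxs)
    have hxeq : TrivSqZeroExt.inl (s * t) * x =
        TrivSqZeroExt.inl (t * b) * TrivSqZeroExt.inl a +
          TrivSqZeroExt.inl (s * l) * TrivSqZeroExt.inr e := by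
      rw [TrivSqZeroExt.inl_mul_inl, TrivSqZeroExt.inl_mul_inr]
      refine TrivSqZeroExt.ext ?_ ?_
      · simp only [TrivSqZeroExt.fst_mul, TrivSqZeroExt.fst_add, TrivSqZeroExt.fst_inl,
          TrivSqZeroExt.fst_inr, add_zero]
        calc s * t * x.fst = t * (s * x.fst) := by ring
          _ = t * (a * b) := by rw [hb]
          _ = t * b * a := by ring
      · simp only [TrivSqZeroExt.snd_mul, TrivSqZeroExt.snd_add, TrivSqZeroExt.snd_inl,
          TrivSqZeroExt.snd_inr, TrivSqZeroExt.fst_inl, smul_zero, add_zero, zero_add,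
          op_smul_eq_smul]
        calc (s * t) • x.snd = s • (t • x.snd) := by rw [mul_smul]
          _ = s • (l • e) := by rw [hl]
          _ = (s * l) • e := by rw [mul_smul]
    rw [hxeq]
    exact Ideal.add_mem _ (Ideal.mul_mem_left _ _ hinl) (Ideal.mul_mem_left _ _ hinr)
  · rw [Ideal.span_le, Set.singleton_subset_iff]
    exact (hmem g).mpr ⟨hgfst ▸ haI', hgsnd ▸ heF⟩
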